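/- Let C ⊆ F_q^n be a linear code of dimension k and minimum distance d with (r,δ)-locality, where δ ≥ 2. Then d ≤ n - k + 1 - (⌈k/r⌉ - 1)(δ - 1). -/

import Mathlib

set_option maxHeartbeats 1000000
set_option synthInstance.maxHeartbeats 400000
set_option linter.unusedSectionVars false
set_option linter.deprecated false


/-- `C` has minimum Hamming distance `d`. -/
def IsMinDist {ι F : Type*} [Fintype ι] [Field F] [DecidableEq F]
    (C : Submodule F (ι → F)) (d : ℕ) : Prop :=
  (∀ c ∈ C, c ≠ 0 → d ≤ hammingNorm c) ∧ ∃ c ∈ C, c ≠ 0 ∧ hammingNorm c = d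

/-- `C` has `(r,δ)`-locality: every coordinate `i` lies in a recovery set `J` of size at most
`r + δ - 1` such that the punctured code `C|_J` has minimum distance at least `δ`. -/
def HasLocality {ι F : Type*} [Fintype ι] [Field F] [DecidableEq F]
    (C : Submodule F (ι → F)) (r δ : ℕ) : Prop :=
  ∀ i : ι, ∃ J : Finset ι, i ∈ J ∧ J.card ≤ r + δ - 1 ∧
    ∀ c ∈ C, (∃ j ∈ J, c j ≠ 0) → δ ≤ (J.filter fun j => c j ≠ 0).card

section LRCAux

variable {F : Type*} [Field F] [DecidableEq F] {n : ℕ}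

/-- Restriction (coordinate-wise zeroing outside `S`) as a linear map. -/
def resL (S : Finset (Fin n)) : (Fin n → F) →ₗ[F] (Fin n → F) where
  toFun c := fun i => if i ∈ S then c i else 0
  map_add' a b := by funext i; by_cases h : i ∈ S <;> simp [h]
  map_smul' m a := by funext i; by_cases h : i ∈ S <;> simp [h]

lemma resL_apply (S : Finset (Fin n)) (c : Fin n → F) (i : Fin n) :
    resL S c i = if i ∈ S then c i else 0 := rfl

lemma resL_resL {S T : Finset (Fin n)} (h : S ⊆ T) (c : Fin n → F) :
    resL S (resL (F := F) T c) = resL S c := by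
  funext i
  simp only [resL_apply]
  by_cases hi : i ∈ S
  · simp [hi, h hi]
  · simp [hi]

lemma resL_comp {S T : Finset (Fin n)} (h : S ⊆ T) :
    (resL (F := F) S).comp (resL T) = resL S :=
  LinearMap.ext fun c => resL_resL h c

lemma resL_univ : resL (F := F) (Finset.univ : Finset (Fin n)) = LinearMap.id := by
  refine LinearMap.ext fun c => ?_
  funext i
  simp [resL_apply]

/-- Rank of the code punctured to `S`. -/
noncomputable def Dm (C : Submodule F (Fin n → F)) (S : Finset (Fin n)) : ℕ :=
  Module.finrank F (C.map (resL S))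

variable (C : Submodule F (Fin n → F))

lemma Dm_mono {S T : Finset (Fin n)} (h : S ⊆ T) : Dm C S ≤ Dm C T := by
  have h1 : C.map (resL S) = (C.map (resL T)).map (resL S) := by
    rw [← Submodule.map_comp, resL_comp h]
  rw [Dm, h1]
  exact Submodule.finrank_map_le _ _

lemma Dm_univ : Dm C Finset.univ = Module.finrank F C := by
  rw [Dm, resL_univ, Submodule.map_id]

lemma Dm_rn (S : Finset (Fin n)) :
    Dm C S + Module.finrank F (LinearMap.ker ((resL S).domRestrict C)) = Module.finrank F C := by
  have h := LinearMap.finrank_range_add_finrank_ker ((resL (F := F) S).domRestrict C)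
  rwa [LinearMap.range_domRestrict] at h

lemma exists_vanish {S : Finset (Fin n)} (h : Dm C S < Module.finrank F C) :
    ∃ c ∈ C, c ≠ 0 ∧ resL S c = 0 := by
  have h2 := Dm_rn C S
  have hne : LinearMap.ker ((resL (F := F) S).domRestrict C) ≠ ⊥ := by
    intro hbot
    rw [hbot, finrank_bot] at h2
    omega
  obtain ⟨x, hxmem, hx0⟩ := Submodule.exists_mem_ne_zero_of_ne_bot hne
  refine ⟨x.1, x.2, ?_, ?_⟩
  · intro h1
    exact hx0 (Subtype.ext h1)
  · exact LinearMap.mem_ker.mp hxmem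

lemma Dm_lt_union {S J : Finset (Fin n)} {c : Fin n → F} (hc : c ∈ C) (h0 : resL S c = 0)
    {i : Fin n} (hi : i ∈ J) (hci : c i ≠ 0) : Dm C S < Dm C (S ∪ J) := by
  have h1 := Dm_rn C S
  have h2 := Dm_rn C (S ∪ J)
  have hlt : LinearMap.ker ((resL (F := F) (S ∪ J)).domRestrict C) <
      LinearMap.ker ((resL (F := F) S).domRestrict C) := by
    refine lt_of_le_of_ne ?_ ?_
    · intro x hx
      rw [LinearMap.mem_ker] at hx ⊢
      have : resL S (x : Fin n → F) = resL S (resL (S ∪ J) (x : Fin n → F)) :=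
        (resL_resL Finset.subset_union_left _).symm
      simp only [LinearMap.domRestrict_apply] at hx ⊢
      rw [this, hx]
      simp
    · intro heq
      have hmem : (⟨c, hc⟩ : C) ∈ LinearMap.ker ((resL (F := F) S).domRestrict C) := by
        rw [LinearMap.mem_ker]
        exact h0
      rw [← heq, LinearMap.mem_ker] at hmem
      simp only [LinearMap.domRestrict_apply] at hmem
      have := congrFun hmem i
      rw [resL_apply] at this
      simp [Finset.mem_union, hi] at this
      exact hci this
  have := Submodule.finrank_lt_finrank_of_lt hlt
  omega

lemma dim_union (S T : Finset (Fin n)) :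
    ∃ W : Submodule F ↥(C.map (resL (S ∪ T))),
      Dm C (S ∪ T) = Dm C S + Module.finrank F ↥W ∧
      ∀ x : ↥(C.map (resL (S ∪ T))), x ∈ W →
        ∃ c, c ∈ C ∧ resL S c = 0 ∧ x.1 = resL (S ∪ T) c := by
  refine ⟨LinearMap.ker ((resL S).domRestrict (C.map (resL (S ∪ T)))), ?_, ?_⟩
  · have h := LinearMap.finrank_range_add_finrank_ker
      ((resL (F := F) S).domRestrict (C.map (resL (S ∪ T))))
    rw [LinearMap.range_domRestrict] at h
    have h2 : (C.map (resL (S ∪ T))).map (resL S) = C.map (resL S) := by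
      rw [← Submodule.map_comp, resL_comp Finset.subset_union_left]
    rw [h2] at h
    unfold Dm
    omega
  · intro x hx
    obtain ⟨c, hcC, hcx⟩ := x.2
    refine ⟨c, hcC, ?_, hcx.symm⟩
    have hker : resL S (x : Fin n → F) = 0 := LinearMap.mem_ker.mp hx
    calc resL S c = resL S (resL (S ∪ T) c) := (resL_resL Finset.subset_union_left c).symm
      _ = resL S (x : Fin n → F) := by rw [hcx]
      _ = 0 := hker

lemma finrank_le_card {V : Submodule F (Fin n → F)} (W : Submodule F ↥V) (R : Finset (Fin n))
    (h : ∀ x : ↥V, x ∈ W → (∀ i ∈ R, x.1 i = 0) → x = 0) :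
    Module.finrank F ↥W ≤ R.card := by
  let ψ : ↥W →ₗ[F] (↥R → F) :=
    (LinearMap.funLeft F F (fun i : ↥R => (i : Fin n))).comp (V.subtype.comp W.subtype)
  have hker : LinearMap.ker ψ = ⊥ := by
    rw [eq_bot_iff]
    intro x hx
    have hx0 : ∀ i ∈ R, (x : ↥V).1 i = 0 := by
      intro i hi
      have := congrFun (LinearMap.mem_ker.mp hx) ⟨i, hi⟩
      exact this
    have := h (x : ↥V) x.2 hx0
    simpa using Subtype.ext this
  have hinj : Function.Injective ψ := (LinearMap.ker_eq_bot (R := F) (R₂ := F) (M := ↥W) (M₂ := ↥R → F) (f := ψ)).mp hker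
  have hle := LinearMap.finrank_le_finrank_of_injective hinj
  rwa [Module.finrank_pi, Fintype.card_coe] at hle

lemma finrank_add_le_card {V : Submodule F (Fin n → F)} (W : Submodule F ↥V)
    (Q : Finset (Fin n)) {δ : ℕ} (hδ : 2 ≤ δ)
    (hdist : ∀ x : ↥V, x ∈ W → x ≠ 0 → δ ≤ (Q.filter fun i => x.1 i ≠ 0).card)
    (hW : W ≠ ⊥) : Module.finrank F ↥W + (δ - 1) ≤ Q.card := by
  obtain ⟨x0, hx0W, hx00⟩ := Submodule.exists_mem_ne_zero_of_ne_bot hW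
  have hδQ : δ ≤ Q.card :=
    le_trans (hdist x0 hx0W hx00) (Finset.card_le_card (Finset.filter_subset _ _))
  obtain ⟨P, hPQ, hPcard⟩ := Finset.exists_subset_card_eq (s := Q) (n := δ - 1) (by omega)
  have hle : Module.finrank F ↥W ≤ (Q \ P).card := by
    apply finrank_le_card W (Q \ P)
    intro x hxW hvan
    by_contra hx0
    have hd := hdist x hxW hx0
    have hsub : (Q.filter fun i => x.1 i ≠ 0) ⊆ P := by
      intro i hi
      rw [Finset.mem_filter] at hi
      by_contra hiP
      exact hi.2 (hvan i (Finset.mem_sdiff.mpr ⟨hi.1, hiP⟩))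
    have := Finset.card_le_card hsub
    omega
  have hc : (Q \ P).card = Q.card - (δ - 1) := by
    rw [Finset.card_sdiff_of_subset hPQ, hPcard]
  omega

lemma build {k r δ : ℕ} (hr : 1 ≤ r) (hδ : 2 ≤ δ)
    (hk : Module.finrank F C = k) (hk1 : 1 ≤ k) (hloc : HasLocality C r δ) :
    ∀ (b : ℕ) (S : Finset (Fin n)) (t : ℕ), Dm C S ≤ k - 1 → k - 1 ≤ Dm C S + b →
      Dm C S + t * (δ - 1) ≤ S.card → Dm C S ≤ t * r →
      ∃ (S' : Finset (Fin n)) (t' : ℕ), Dm C S' ≤ k - 1 ∧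
        k - 1 + t' * (δ - 1) ≤ S'.card ∧ k ≤ (t' + 1) * r := by
  intro b
  induction b with
  | zero =>
    intro S t h1 h2 h3 h4
    have h5 : (t + 1) * r = t * r + r := by ring
    exact ⟨S, t, h1, by omega, by omega⟩
  | succ b ih =>
    intro S t h1 h2 h3 h4
    by_cases heq : k - 1 ≤ Dm C S
    · have h5 : (t + 1) * r = t * r + r := by ring
      exact ⟨S, t, h1, by omega, by omega⟩
    · push_neg at heq
      have hmk : Dm C S < Module.finrank F C := by omega
      obtain ⟨c, hcC, hc0, hcS⟩ := exists_vanish C hmk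
      obtain ⟨i, hci⟩ := Function.ne_iff.mp hc0
      simp only [Pi.zero_apply] at hci
      obtain ⟨J, hiJ, hJcard, hJdist⟩ := hloc i
      have hlt : Dm C S < Dm C (S ∪ J) := Dm_lt_union C hcC hcS hiJ hci
      obtain ⟨W, hWdim, hWmem⟩ := dim_union C S J
      have hWne : W ≠ ⊥ := by
        intro hbot
        rw [hbot, finrank_bot] at hWdim
        omega
      have hSvan : ∀ c' : Fin n → F, resL S c' = 0 → ∀ j ∈ S, c' j = 0 := by
        intro c' hc' j hj
        have := congrFun hc' j
        rw [resL_apply] at this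
        simpa [hj] using this
      have hdistW : ∀ x : ↥(C.map (resL (S ∪ J))), x ∈ W → x ≠ 0 →
          δ ≤ ((J \ S).filter fun j => x.1 j ≠ 0).card := by
        intro x hxW hx0
        obtain ⟨c', hc'C, hc'S, hc'x⟩ := hWmem x hxW
        have hx1 : x.1 ≠ 0 := fun h => hx0 (Subtype.ext h)
        obtain ⟨i0, hi0⟩ := Function.ne_iff.mp hx1
        simp only [Pi.zero_apply] at hi0
        have hi0SJ : i0 ∈ S ∪ J := by
          by_contra hni
          apply hi0
          rw [hc'x, resL_apply]
          simp [hni]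
        have hxc : x.1 i0 = c' i0 := by
          rw [hc'x, resL_apply]
          simp [hi0SJ]
        have hc'i0 : c' i0 ≠ 0 := by rw [← hxc]; exact hi0
        have hi0S : i0 ∉ S := fun hS => hc'i0 (hSvan c' hc'S i0 hS)
        have hi0J : i0 ∈ J := by
          rcases Finset.mem_union.mp hi0SJ with h | h
          · exact absurd h hi0S
          · exact h
        have hdel := hJdist c' hc'C ⟨i0, hi0J, hc'i0⟩
        refine le_trans hdel (Finset.card_le_card ?_)
        intro j hj
        rw [Finset.mem_filter] at hj
        have hjS : j ∉ S := fun hS => hj.2 (hSvan c' hc'S j hS)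
        rw [Finset.mem_filter, Finset.mem_sdiff]
        refine ⟨⟨hj.1, hjS⟩, ?_⟩
        have : x.1 j = c' j := by
          rw [hc'x, resL_apply]
          simp [Finset.mem_union, hj.1]
        rw [this]
        exact hj.2
      have hkey : Module.finrank F ↥W + (δ - 1) ≤ (J \ S).card :=
        finrank_add_le_card W (J \ S) hδ hdistW hWne
      have hJS_le : (J \ S).card ≤ r + δ - 1 :=
        le_trans (Finset.card_le_card (Finset.sdiff_subset)) hJcard
      have har : Module.finrank F ↥W ≤ r := by omega
      have hub : Dm C (S ∪ J) ≤ k := by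
        rw [← hk, ← Dm_univ]
        exact Dm_mono C (Finset.subset_univ _)
      have hcardU : (S ∪ J).card = S.card + (J \ S).card := by
        rw [← Finset.union_sdiff_self_eq_union]
        exact Finset.card_union_of_disjoint Finset.disjoint_sdiff
      by_cases hcase : Dm C (S ∪ J) ≤ k - 1
      · refine ih (S ∪ J) (t + 1) hcase (by omega) ?_ ?_
        · have h5 : (t + 1) * (δ - 1) = t * (δ - 1) + (δ - 1) := by ring
          omega
        · have h5 : (t + 1) * r = t * r + r := by ring
          omega
      · have hDk : Dm C (S ∪ J) = k := by omega
        have haT : k - 1 - Dm C S ≤ (J \ S).card := by omega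
        obtain ⟨T, hTsub, hTcard⟩ := Finset.exists_subset_card_eq haT
        obtain ⟨W2, hW2dim, hW2mem⟩ := dim_union C S T
        have hW2le : Module.finrank F ↥W2 ≤ T.card := by
          apply finrank_le_card W2 T
          intro x hxW hvan
          obtain ⟨c', hc'C, hc'S, hc'x⟩ := hW2mem x hxW
          have hx1 : x.1 = 0 := by
            funext j
            by_cases hjT : j ∈ T
            · exact hvan j hjT
            · rw [hc'x, resL_apply]
              by_cases hjSU : j ∈ S ∪ T
              · have hjS : j ∈ S := by
                  rcases Finset.mem_union.mp hjSU with h | h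
                  · exact h
                  · exact absurd h hjT
                simp only [hjSU, if_true]
                exact hSvan c' hc'S j hjS
              · simp [hjSU]
          exact Subtype.ext hx1
        have hTdisj : Disjoint S T := Finset.disjoint_sdiff.mono_right hTsub
        have hcardT : (S ∪ T).card = S.card + T.card := Finset.card_union_of_disjoint hTdisj
        refine ⟨S ∪ T, t, by omega, by omega, ?_⟩
        have h5 : (t + 1) * r = t * r + r := by ring
        omega

end LRCAux

/-- Singleton-type bound for `(r,δ)`-LRCs:
`d ≤ n - k + 1 - (⌈k/r⌉ - 1)(δ - 1)`. -/
theorem stmt1 {F : Type*} [Field F] [Fintype F] [DecidableEq F]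
    {n k d r δ : ℕ} (hr : 1 ≤ r) (hδ : 2 ≤ δ)
    (C : Submodule F (Fin n → F))
    (hk : Module.finrank F C = k) (hd : IsMinDist C d)
    (hloc : HasLocality C r δ) :
    (d : ℤ) ≤ (n : ℤ) - k + 1 - (⌈(k : ℚ) / (r : ℚ)⌉ - 1) * ((δ : ℤ) - 1) := by
  -- k ≥ 1, else no nonzero codeword
  have hk1 : 1 ≤ k := by
    by_contra hk0
    push_neg at hk0
    interval_cases k
    · have hbot : C = ⊥ := Submodule.finrank_eq_zero.mp hk
      obtain ⟨c, hcC, hc0, _⟩ := hd.2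
      rw [hbot, Submodule.mem_bot] at hcC
      exact hc0 hcC
  -- initial invariants for the empty set
  have hD0 : Dm C (∅ : Finset (Fin n)) = 0 := by
    have : C.map (resL (∅ : Finset (Fin n))) = ⊥ := by
      rw [eq_bot_iff]
      rintro x ⟨c, _, rfl⟩
      rw [Submodule.mem_bot]
      funext i
      rw [resL_apply]
      simp
    rw [Dm, this, finrank_bot]
  obtain ⟨S', t', hS'dim, hS'card, hS'r⟩ :=
    build C hr hδ hk hk1 hloc (k - 1) ∅ 0 (by omega) (by omega) (by simp [hD0]) (by omega)
  -- a nonzero codeword vanishing on S'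
  obtain ⟨c, hcC, hc0, hcS'⟩ := exists_vanish C (by omega : Dm C S' < Module.finrank F C)
  have hdc : d ≤ hammingNorm c := hd.1 c hcC hc0
  -- hammingNorm c + S'.card ≤ n
  have hdisj : Disjoint ({i | c i ≠ 0} : Finset (Fin n)) S' := by
    rw [Finset.disjoint_left]
    intro i hi hiS'
    rw [Finset.mem_filter] at hi
    apply hi.2
    have := congrFun hcS' i
    rw [resL_apply] at this
    simpa [hiS'] using this
  have hcardle : hammingNorm c + S'.card ≤ n := by
    have h1 : (({i | c i ≠ 0} : Finset (Fin n)) ∪ S').card =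
        hammingNorm c + S'.card := Finset.card_union_of_disjoint hdisj
    have h2 := Finset.card_le_univ (({i | c i ≠ 0} : Finset (Fin n)) ∪ S')
    rw [h1, Fintype.card_fin] at h2
    exact h2
  -- key numeric facts
  have hn : d + (k - 1) + t' * (δ - 1) ≤ n := by omega
  -- ceiling bound
  set q : ℤ := ⌈(k : ℚ) / (r : ℚ)⌉ with hq
  have hrQ : (0 : ℚ) < (r : ℚ) := by exact_mod_cast hr
  have hq_le : q ≤ (t' : ℤ) + 1 := by
    rw [hq]
    rw [Int.ceil_le]
    rw [div_le_iff₀ hrQ]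
    push_cast
    exact_mod_cast hS'r
  have hq_pos : 1 ≤ q := by
    rw [hq]
    have : (0 : ℚ) < (k : ℚ) / (r : ℚ) := by positivity
    exact Int.ceil_pos.mpr this
  have hδ1 : (0 : ℤ) ≤ (δ : ℤ) - 1 := by
    have : (1 : ℤ) ≤ (δ : ℤ) := by exact_mod_cast (by omega : 1 ≤ δ)
    omega
  have hmul : (q - 1) * ((δ : ℤ) - 1) ≤ (t' : ℤ) * ((δ : ℤ) - 1) :=
    mul_le_mul_of_nonneg_right (by omega) hδ1
  have hcast : (d : ℤ) + ((k : ℤ) - 1) + (t' : ℤ) * ((δ : ℤ) - 1) ≤ (n : ℤ) := by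
    have h1 : ((d + (k - 1) + t' * (δ - 1) : ℕ) : ℤ) ≤ (n : ℤ) := by exact_mod_cast hn
    push_cast [Nat.cast_sub (by omega : 1 ≤ k), Nat.cast_sub (by omega : 1 ≤ δ)] at h1
    linarith
  linarith
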